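/- Let G be a graph on n vertices whose graph obtained by removing all universal vertices is isomorphic to the disjoint union K₃ + K₁ of a triangle and an isolated vertex, and let k ≤ n − 1. Then B_{≥k}(G) is isomorphic to the complete graph K₄. -/

import Mathlib

open Finset

variable {V : Type*} [Fintype V] [DecidableEq V]

def IsISP (G : SimpleGraph V) (P : Finpartition (univ : Finset V)) : Prop :=
  ∀ A ∈ P.parts, ∀ u ∈ A, ∀ v ∈ A, ¬ G.Adj u v

def samePart (P : Finpartition (univ : Finset V)) (u v : V) : Prop :=
  ∃ A ∈ P.parts, u ∈ A ∧ v ∈ A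

def MovedBy (P Q : Finpartition (univ : Finset V)) (x : V) : Prop :=
  P ≠ Q ∧ ∀ u v : V, u ≠ x → v ≠ x → (samePart P u v ↔ samePart Q u v)

def BellGraph (G : SimpleGraph V) :
    SimpleGraph {P : Finpartition (univ : Finset V) // IsISP G P} where
  Adj P Q := ∃ x, MovedBy P.1 Q.1 x
  symm := by
    constructor
    rintro P Q ⟨x, hne, h⟩
    exact ⟨x, Ne.symm hne, fun u v hu hv => (h u v hu hv).symm⟩
  loopless := by
    constructor
    rintro P ⟨x, hne, _⟩
    exact hne rfl

def UpperBell (G : SimpleGraph V) (k : ℕ) :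
    SimpleGraph {P : Finpartition (univ : Finset V) // IsISP G P ∧ k ≤ P.parts.card} where
  Adj P Q := ∃ x, MovedBy P.1 Q.1 x
  symm := by
    constructor
    rintro P Q ⟨x, hne, h⟩
    exact ⟨x, Ne.symm hne, fun u v hu hv => (h u v hu hv).symm⟩
  loopless := by
    constructor
    rintro P ⟨x, hne, _⟩
    exact hne rfl

def IsUniversal (G : SimpleGraph V) (v : V) : Prop :=
  ∀ w, w ≠ v → G.Adj v w

def K3plusK1 : SimpleGraph (Fin 4) where
  Adj a b := a ≠ b ∧ a ≠ 3 ∧ b ≠ 3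
  symm := by constructor; rintro a b ⟨h1, h2, h3⟩; exact ⟨h1.symm, h3, h2⟩
  loopless := by constructor; rintro a ⟨h, _⟩; exact h rfl

section Aux

variable {V : Type*} [Fintype V] [DecidableEq V]

lemma samePart_iff_mem (P : Finpartition (univ : Finset V)) (u v : V) :
    samePart P u v ↔ v ∈ P.part u := by
  constructor
  · rintro ⟨A, hA, hu, hv⟩
    rwa [P.part_eq_of_mem hA hu]
  · intro h
    exact ⟨P.part u, P.part_mem.2 (mem_univ u), P.mem_part (mem_univ u), h⟩

lemma samePart_refl (P : Finpartition (univ : Finset V)) (u : V) : samePart P u u :=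
  ⟨P.part u, P.part_mem.2 (mem_univ u), P.mem_part (mem_univ u), P.mem_part (mem_univ u)⟩

lemma samePart_symm {P : Finpartition (univ : Finset V)} {u v : V}
    (h : samePart P u v) : samePart P v u := by
  obtain ⟨A, hA, hu, hv⟩ := h
  exact ⟨A, hA, hv, hu⟩

lemma samePart_trans {P : Finpartition (univ : Finset V)} {u v w : V}
    (h1 : samePart P u v) (h2 : samePart P u w) : samePart P v w := by
  obtain ⟨A, hA, hu, hv⟩ := h1
  obtain ⟨B, hB, hu', hw⟩ := h2
  obtain rfl := P.eq_of_mem_parts hA hB hu hu'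
  exact ⟨A, hA, hv, hw⟩

lemma finpartition_eq_of_samePart {P Q : Finpartition (univ : Finset V)}
    (h : ∀ u v, samePart P u v ↔ samePart Q u v) : P = Q := by
  have key : ∀ (P Q : Finpartition (univ : Finset V)),
      (∀ u v, samePart P u v ↔ samePart Q u v) → ∀ A ∈ P.parts, A ∈ Q.parts := by
    intro P Q h A hA
    obtain ⟨x, hx⟩ := P.nonempty_of_mem_parts hA
    have : A = Q.part x := by
      ext y
      constructor
      · intro hy
        rw [← samePart_iff_mem]
        exact (h x y).1 ⟨A, hA, hx, hy⟩
      · intro hy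
        rw [← samePart_iff_mem] at hy
        obtain ⟨B, hB, hx', hy'⟩ := (h x y).2 hy
        rwa [P.eq_of_mem_parts hA hB hx hx']
    rw [this]
    exact Q.part_mem.2 (mem_univ x)
  ext A
  exact ⟨key P Q h A, key Q P (fun u v => (h u v).symm) A⟩

/-- The setoid whose only nontrivial class is `{d, p}`. -/
def pairSetoid (d p : V) : Setoid V where
  r x y := x = y ∨ (x = d ∧ y = p) ∨ (x = p ∧ y = d)
  iseqv := by
    refine ⟨fun x => Or.inl rfl, ?_, ?_⟩
    · intro x y h
      rcases h with h | ⟨h1, h2⟩ | ⟨h1, h2⟩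
      · exact Or.inl h.symm
      · exact Or.inr (Or.inr ⟨h2, h1⟩)
      · exact Or.inr (Or.inl ⟨h2, h1⟩)
    · intro x y z h1 h2
      rcases h1 with h1 | ⟨ha, hb⟩ | ⟨ha, hb⟩ <;>
        rcases h2 with h2 | ⟨hc, hd⟩ | ⟨hc, hd⟩ <;>
        subst_vars <;> tauto

instance pairSetoidDec (d p : V) : DecidableRel (pairSetoid d p).r := fun x y =>
  inferInstanceAs (Decidable (x = y ∨ (x = d ∧ y = p) ∨ (x = p ∧ y = d)))

/-- The partition of `V` into singletons except that `d` and `p` share a part. -/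
def pairPart (d p : V) : Finpartition (univ : Finset V) :=
  Finpartition.ofSetoid (pairSetoid d p)

lemma samePart_pairPart (d p u v : V) :
    samePart (pairPart d p) u v ↔ u = v ∨ (u = d ∧ v = p) ∨ (u = p ∧ v = d) := by
  rw [samePart_iff_mem]
  exact Finpartition.mem_part_ofSetoid_iff_rel

lemma isISP_pairPart (G : SimpleGraph V) (d p : V) (hdp : ¬ G.Adj d p) :
    IsISP G (pairPart d p) := by
  intro A hA u hu v hv
  have h : samePart (pairPart d p) u v := ⟨A, hA, hu, hv⟩
  rw [samePart_pairPart] at h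
  rcases h with rfl | ⟨rfl, rfl⟩ | ⟨rfl, rfl⟩
  · exact G.loopless.irrefl u
  · exact hdp
  · exact fun h => hdp h.symm

lemma card_parts_ge (P : Finpartition (univ : Finset V)) (d : V)
    (h : ∀ u v, samePart P u v → u ≠ v → u = d ∨ v = d) :
    Fintype.card V - 1 ≤ P.parts.card := by
  have hsum : ∑ A ∈ P.parts, A.card = Fintype.card V := by
    rw [P.sum_card_parts, Finset.card_univ]
  have hle : ∀ A ∈ P.parts, A.card ≤ if d ∈ A then 2 else 1 := by
    intro A hA
    split_ifs with hd
    · have herase : (A.erase d).card ≤ 1 := by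
        rw [Finset.card_le_one]
        intro u hu v hv
        have hu' := Finset.mem_of_mem_erase hu
        have hv' := Finset.mem_of_mem_erase hv
        by_contra hne
        rcases h u v ⟨A, hA, hu', hv'⟩ hne with rfl | rfl
        · exact Finset.notMem_erase u A hu
        · exact Finset.notMem_erase v A hv
      have := Finset.card_erase_add_one hd
      omega
    · rw [Finset.card_le_one]
      intro u hu v hv
      by_contra hne
      rcases h u v ⟨A, hA, hu, hv⟩ hne with rfl | rfl
      · exact hd hu
      · exact hd hv
  have h2 : ∑ A ∈ P.parts, A.card ≤ ∑ A ∈ P.parts, (if d ∈ A then 2 else 1) :=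
    Finset.sum_le_sum hle
  have h3 : ∑ A ∈ P.parts, (if d ∈ A then 2 else 1) =
      P.parts.card + (P.parts.filter (fun A => d ∈ A)).card := by
    rw [Finset.card_filter, Finset.card_eq_sum_ones, ← Finset.sum_add_distrib]
    exact Finset.sum_congr rfl (fun A _ => by split_ifs <;> rfl)
  have h4 : (P.parts.filter (fun A => d ∈ A)).card ≤ 1 := by
    rw [Finset.card_le_one]
    intro A hA B hB
    rw [Finset.mem_filter] at hA hB
    exact P.eq_of_mem_parts hA.1 hB.1 hA.2 hB.2
  omega

end Aux

section Main

variable {V : Type*} [Fintype V] [DecidableEq V]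

open Classical in
/-- The index of the vertex sharing a part with `f 3` (or `3` if `f 3` is alone
among `f 0, f 1, f 2`). -/
noncomputable def bellIndex (f : Fin 4 → V) (P : Finpartition (univ : Finset V)) : Fin 4 :=
  if samePart P (f 3) (f 0) then 0
  else if samePart P (f 3) (f 1) then 1
  else if samePart P (f 3) (f 2) then 2 else 3

theorem main_aux (G : SimpleGraph V) (k : ℕ) (f : Fin 4 → V)
    (hinj : Function.Injective f)
    (hnu : ∀ i, ¬ IsUniversal G (f i))
    (hcover : ∀ v, ¬ IsUniversal G v → ∃ i, v = f i)
    (hadj : ∀ i j, G.Adj (f i) (f j) ↔ (i ≠ j ∧ i ≠ 3 ∧ j ≠ 3))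
    (hk : k ≤ Fintype.card V - 1) :
    Nonempty (UpperBell G k ≃g (⊤ : SimpleGraph (Fin 4))) := by
  classical
  have hdne : ∀ i : Fin 4, i ≠ 3 → f i ≠ f 3 := fun i hi h => hi (hinj h)
  have hAdjNe : ∀ u v : V, u ≠ v → u ≠ f 3 → v ≠ f 3 → G.Adj u v := by
    intro u v huv hud hvd
    by_cases hu : IsUniversal G u
    · exact hu v (fun h => huv h.symm)
    by_cases hv : IsUniversal G v
    · exact (hv u huv).symm
    obtain ⟨i, rfl⟩ := hcover u hu
    obtain ⟨j, rfl⟩ := hcover v hv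
    rw [hadj]
    exact ⟨fun h => huv (congrArg f h), fun h => hud (congrArg f h),
      fun h => hvd (congrArg f h)⟩
  have hdnadj : ∀ i, ¬ G.Adj (f 3) (f i) := by
    intro i h
    rw [hadj] at h
    exact h.2.1 rfl
  have hISP : ∀ i, IsISP G (pairPart (f 3) (f i)) := fun i =>
    isISP_pairPart G (f 3) (f i) (hdnadj i)
  have hcard : ∀ i, k ≤ (pairPart (f 3) (f i)).parts.card := by
    intro i
    refine le_trans hk (card_parts_ge _ (f 3) ?_)
    intro u v h hne
    rw [samePart_pairPart] at h
    rcases h with rfl | ⟨rfl, rfl⟩ | ⟨rfl, rfl⟩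
    · exact absurd rfl hne
    · exact Or.inl rfl
    · exact Or.inr rfl
  have hchar : ∀ P : Finpartition (univ : Finset V), IsISP G P →
      ∀ u v : V, u ≠ f 3 → v ≠ f 3 → (samePart P u v ↔ u = v) := by
    intro P hP u v hu hv
    constructor
    · intro h
      by_contra hne
      obtain ⟨A, hA, huA, hvA⟩ := h
      exact hP A hA u huA v hvA (hAdjNe u v hne hu hv)
    · rintro rfl; exact samePart_refl P u
  have hduniv : ∀ (P : Finpartition (univ : Finset V)), IsISP G P →
      ∀ v, IsUniversal G v → ¬ samePart P (f 3) v := by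
    intro P hP v hv h
    obtain ⟨A, hA, hdA, hvA⟩ := h
    have hvd : v ≠ f 3 := fun h' => hnu 3 (h' ▸ hv)
    exact hP A hA v hvA (f 3) hdA (hv (f 3) (Ne.symm hvd))
  have huniq : ∀ P : Finpartition (univ : Finset V), IsISP G P →
      ∀ i j : Fin 4, i ≠ 3 → j ≠ 3 → samePart P (f 3) (f i) → samePart P (f 3) (f j) →
      i = j := by
    intro P hP i j hi hj h1 h2
    exact hinj ((hchar P hP _ _ (hdne i hi) (hdne j hj)).1 (samePart_trans h1 h2))
  have hpp : ∀ i j : Fin 4, samePart (pairPart (f 3) (f i)) (f 3) (f j) ↔ (j = i ∨ j = 3) := by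
    intro i j
    rw [samePart_pairPart]
    constructor
    · rintro (h | ⟨-, h⟩ | ⟨h, h'⟩)
      · exact Or.inr (hinj h).symm
      · exact Or.inl (hinj h)
      · exact Or.inr (hinj h')
    · rintro (rfl | rfl)
      · exact Or.inr (Or.inl ⟨rfl, rfl⟩)
      · exact Or.inl rfl
  have hFspec : ∀ P : Finpartition (univ : Finset V), IsISP G P → ∀ j : Fin 4,
      samePart P (f 3) (f j) ↔ (j = bellIndex f P ∨ j = 3) := by
    intro P hP j
    by_cases hj : j = 3
    · subst hj
      simp [samePart_refl]
    unfold bellIndex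
    split_ifs with h0 h1 h2
    · constructor
      · intro h
        exact Or.inl (huniq P hP j 0 hj (by decide) h h0)
      · rintro (rfl | rfl)
        · exact h0
        · exact absurd rfl hj
    · constructor
      · intro h
        exact Or.inl (huniq P hP j 1 hj (by decide) h h1)
      · rintro (rfl | rfl)
        · exact h1
        · exact absurd rfl hj
    · constructor
      · intro h
        exact Or.inl (huniq P hP j 2 hj (by decide) h h2)
      · rintro (rfl | rfl)
        · exact h2
        · exact absurd rfl hj
    · constructor
      · intro h
        fin_cases j
        · exact absurd h h0
        · exact absurd h h1
        · exact absurd h h2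
        · exact absurd rfl hj
      · rintro (rfl | rfl) <;> exact absurd rfl hj
  have hright : ∀ i : Fin 4, bellIndex f (pairPart (f 3) (f i)) = i := by
    intro i
    have h1 : ∀ j : Fin 4, (j = bellIndex f (pairPart (f 3) (f i)) ∨ j = 3) ↔ (j = i ∨ j = 3) :=
      fun j => (hFspec _ (hISP i) j).symm.trans (hpp i j)
    by_cases hFi3 : bellIndex f (pairPart (f 3) (f i)) = 3
    · rcases (h1 i).2 (Or.inl rfl) with h | h
      · exact h.symm
      · exact hFi3.trans h.symm
    · rcases (h1 (bellIndex f (pairPart (f 3) (f i)))).1 (Or.inl rfl) with h | h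
      · exact h
      · exact absurd h hFi3
  have hleft : ∀ P : Finpartition (univ : Finset V), IsISP G P →
      pairPart (f 3) (f (bellIndex f P)) = P := by
    intro P hP
    apply finpartition_eq_of_samePart
    intro u v
    rw [samePart_pairPart]
    by_cases hu : u = f 3 <;> by_cases hv : v = f 3
    · subst hu; subst hv
      simp [samePart_refl]
    · subst hu
      by_cases hvc : IsUniversal G v
      · have hR : ¬ samePart P (f 3) v := hduniv P hP v hvc
        constructor
        · rintro (h | ⟨-, h⟩ | ⟨h, h'⟩)
          · exact absurd h.symm hv
          · exact absurd (h ▸ hvc) (hnu _)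
          · exact absurd h' hv
        · intro h; exact absurd h hR
      · obtain ⟨j, rfl⟩ := hcover v hvc
        have hj : j ≠ 3 := fun h => hv (congrArg f h)
        rw [hFspec P hP j]
        constructor
        · rintro (h | ⟨-, h⟩ | ⟨h, h'⟩)
          · exact Or.inr (hinj h).symm
          · exact Or.inl (hinj h)
          · exact Or.inr (hinj h')
        · rintro (rfl | rfl)
          · exact Or.inr (Or.inl ⟨rfl, rfl⟩)
          · exact Or.inl rfl
    · subst hv
      by_cases huc : IsUniversal G u
      · have hR : ¬ samePart P (f 3) u := hduniv P hP u huc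
        constructor
        · rintro (h | ⟨h, h'⟩ | ⟨h, -⟩)
          · exact absurd h hu
          · exact absurd h hu
          · exact absurd (h ▸ huc) (hnu _)
        · intro h; exact absurd (samePart_symm h) hR
      · obtain ⟨j, rfl⟩ := hcover u huc
        have hj : j ≠ 3 := fun h => hu (congrArg f h)
        have hsymm : samePart P (f j) (f 3) ↔ samePart P (f 3) (f j) :=
          ⟨samePart_symm, samePart_symm⟩
        rw [hsymm, hFspec P hP j]
        constructor
        · rintro (h | ⟨h, h'⟩ | ⟨h, -⟩)
          · exact Or.inr (hinj h)
          · exact absurd h hu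
          · exact Or.inl (hinj h)
        · rintro (rfl | rfl)
          · exact Or.inr (Or.inr ⟨rfl, rfl⟩)
          · exact Or.inl rfl
    · rw [hchar P hP u v hu hv]
      constructor
      · rintro (rfl | ⟨h, -⟩ | ⟨-, h⟩)
        · rfl
        · exact absurd h hu
        · exact absurd h hv
      · rintro rfl; exact Or.inl rfl
  refine ⟨⟨⟨fun P => bellIndex f P.1,
      fun i => ⟨pairPart (f 3) (f i), hISP i, hcard i⟩,
      fun P => Subtype.ext (hleft P.1 P.2.1), fun i => hright i⟩, ?_⟩⟩
  intro P Q
  simp only [Equiv.coe_fn_mk, SimpleGraph.top_adj]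
  constructor
  · intro hne
    have hPQ : P.1 ≠ Q.1 := by
      intro h
      exact hne (by rw [h])
    exact ⟨f 3, hPQ, fun u v hu hv =>
      (hchar P.1 P.2.1 u v hu hv).trans (hchar Q.1 Q.2.1 u v hu hv).symm⟩
  · rintro ⟨x, hne, -⟩ h
    apply hne
    have h1 := hleft P.1 P.2.1
    have h2 := hleft Q.1 Q.2.1
    rw [← h1, ← h2, h]

end Main

theorem stmt17 (G : SimpleGraph V) (k : ℕ)
    (hiso : Nonempty ((SimpleGraph.induce {v : V | ¬ IsUniversal G v} G) ≃g K3plusK1))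
    (hk : k ≤ Fintype.card V - 1) :
    Nonempty (UpperBell G k ≃g (⊤ : SimpleGraph (Fin 4))) := by
  classical
  obtain ⟨e⟩ := hiso
  refine main_aux G k (fun i => ((e.symm i : {v : V | ¬ IsUniversal G v}) : V)) ?_ ?_ ?_ ?_ hk
  · intro i j hij
    exact e.symm.injective (Subtype.ext hij)
  · intro i
    exact (e.symm i).2
  · intro v hv
    exact ⟨e ⟨v, hv⟩, by simp⟩
  · intro i j
    exact e.symm.map_adj_iff (v := i) (w := j)
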